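/- Let G be a simple graph on n ≥ 2 vertices with m edges and let θ be the number of negative adjacency eigenvalues of G. Then for every integer k with 1 ≤ k ≤ n, the sum of the k largest adjacency eigenvalues of G satisfies Σ_{i=1}^{k} λᵢ(G) ≤ √( 2m(k − 1/(θ+1)) ). -/

import Mathlib

lemma stmt9_sum_eig {n : ℕ} (A : Matrix (Fin n) (Fin n) ℝ) (hA : A.IsHermitian) :
    ∑ i, hA.eigenvalues i = A.trace := by
  have h := hA.spectral_theorem
  set U := (Matrix.IsHermitian.eigenvectorUnitary hA : Matrix (Fin n) (Fin n) ℝ) with hUdef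
  have hU : star U * U = 1 := Matrix.UnitaryGroup.star_mul_self _
  calc ∑ i, hA.eigenvalues i
      = (Matrix.diagonal ((RCLike.ofReal : ℝ → ℝ) ∘ hA.eigenvalues)).trace := by
        simp [Matrix.trace_diagonal]
    _ = (U * Matrix.diagonal ((RCLike.ofReal : ℝ → ℝ) ∘ hA.eigenvalues) * star U).trace := by
        rw [Matrix.trace_mul_cycle, hU, Matrix.one_mul]
    _ = A.trace := (congrArg Matrix.trace h).symm

lemma stmt9_sum_eig_sq {n : ℕ} (A : Matrix (Fin n) (Fin n) ℝ) (hA : A.IsHermitian) :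
    ∑ i, (hA.eigenvalues i) ^ 2 = (A * A).trace := by
  have h := hA.spectral_theorem
  set U := (Matrix.IsHermitian.eigenvectorUnitary hA : Matrix (Fin n) (Fin n) ℝ) with hUdef
  have hU : star U * U = 1 := Matrix.UnitaryGroup.star_mul_self _
  set D := Matrix.diagonal ((RCLike.ofReal : ℝ → ℝ) ∘ hA.eigenvalues) with hD
  have hAA : A * A = U * (D * D) * star U := by
    rw [h]
    calc U * D * star U * (U * D * star U) = U * D * (star U * U) * D * star U := by
          noncomm_ring
      _ = U * (D * D) * star U := by rw [hU]; noncomm_ring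
  have hDD : D * D = Matrix.diagonal (fun i => hA.eigenvalues i ^ 2) := by
    rw [hD, Matrix.diagonal_mul_diagonal]
    funext i j
    simp [Matrix.diagonal, sq]
  calc ∑ i, (hA.eigenvalues i) ^ 2 = (D * D).trace := by rw [hDD]; simp [Matrix.trace_diagonal]
    _ = (U * (D * D) * star U).trace := by rw [Matrix.trace_mul_cycle, hU, Matrix.one_mul]
    _ = (A * A).trace := by rw [← hAA]

lemma stmt9_adj_trace_sq {n : ℕ} (G : SimpleGraph (Fin n)) [DecidableRel G.Adj] :
    (G.adjMatrix ℝ * G.adjMatrix ℝ).trace = 2 * (G.edgeFinset.card : ℝ) := by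
  have h1 : (G.adjMatrix ℝ * G.adjMatrix ℝ).trace = ∑ i, (G.degree i : ℝ) := by
    rw [Matrix.trace]
    congr 1; funext i
    simpa using G.adjMatrix_mul_self_apply_self (α := ℝ) i
  rw [h1, ← Nat.cast_sum, SimpleGraph.sum_degrees_eq_twice_card_edges]
  push_cast
  ring

lemma stmt9_card_filter_val_lt (n q : ℕ) (h : q ≤ n) :
    ((Finset.univ : Finset (Fin n)).filter (fun i : Fin n => (i : ℕ) < q)).card = q := by
  have himg : ((Finset.univ : Finset (Fin n)).filter (fun i : Fin n => (i : ℕ) < q)).image Fin.val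
      = Finset.range q := by
    ext a
    simp only [Finset.mem_image, Finset.mem_filter, Finset.mem_univ, true_and, Finset.mem_range]
    constructor
    · rintro ⟨i, hi, rfl⟩; exact hi
    · intro ha; exact ⟨⟨a, lt_of_lt_of_le ha h⟩, ha, rfl⟩
  rw [← Finset.card_image_of_injective _ Fin.val_injective, himg, Finset.card_range]

set_option maxHeartbeats 2000000 in
/-- For a simple graph `G` on `n ≥ 2` vertices with `m ≥ 1` edges
and `θ` negative adjacency eigenvalues, for every `1 ≤ k ≤ n`,
`∑_{i=1}^k λᵢ(G) ≤ √(2m(k − 1/(θ+1)))`. -/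
theorem stmt9 {n : ℕ} (hn : 2 ≤ n) (G : SimpleGraph (Fin n)) [DecidableRel G.Adj]
    (m : ℕ) (hm : m = G.edgeFinset.card) (hm1 : 1 ≤ m)
    (hA : (G.adjMatrix ℝ).IsHermitian)
    (lam : Fin n → ℝ) (σ : Equiv.Perm (Fin n))
    (hlam : lam = hA.eigenvalues ∘ σ) (hdec : Antitone lam)
    (θ : ℕ) (hθ : θ = (Finset.univ.filter (fun i => lam i < 0)).card)
    (k : ℕ) (hk1 : 1 ≤ k) (hkn : k ≤ n) :
    ∑ i ∈ Finset.univ.filter (fun i : Fin n => (i : ℕ) < k), lam i ≤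
      Real.sqrt (2 * (m : ℝ) * ((k : ℝ) - 1 / ((θ : ℝ) + 1))) := by
  -- basic spectral facts
  have htr0 : ∑ i, lam i = 0 := by
    rw [hlam]
    have h1 : ∑ i, (hA.eigenvalues ∘ σ) i = ∑ i, hA.eigenvalues i :=
      Equiv.sum_comp σ hA.eigenvalues
    rw [h1, stmt9_sum_eig _ hA, SimpleGraph.trace_adjMatrix]
  have hsq : ∑ i, lam i ^ 2 = 2 * (m : ℝ) := by
    rw [hlam]
    have h1 : ∑ i, ((hA.eigenvalues ∘ σ) i) ^ 2 = ∑ i, (hA.eigenvalues i) ^ 2 :=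
      Equiv.sum_comp σ (fun i => hA.eigenvalues i ^ 2)
    rw [h1, stmt9_sum_eig_sq _ hA, stmt9_adj_trace_sq, hm]
  -- sign structure
  set D := Finset.univ.filter (fun i : Fin n => lam i < 0) with hD
  have hθn : θ ≤ n := by
    rw [hθ]
    exact (Finset.card_filter_le _ _).trans (by simp)
  set p := n - θ with hp
  have key1 : ∀ i : Fin n, (i : ℕ) < p → 0 ≤ lam i := by
    intro i hi
    by_contra hneg
    push_neg at hneg
    have hsub : Finset.Ici i ⊆ D := by
      intro j hj
      simp only [hD, Finset.mem_filter, Finset.mem_univ, true_and]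
      exact lt_of_le_of_lt (hdec (Finset.mem_Ici.mp hj)) hneg
    have hc := Finset.card_le_card hsub
    rw [Fin.card_Ici, ← hθ] at hc
    omega
  have key2 : ∀ i : Fin n, p ≤ (i : ℕ) → lam i < 0 := by
    intro i hi
    by_contra hpos
    push_neg at hpos
    have hsub : D ⊆ Finset.Ioi i := by
      intro j hj
      simp only [hD, Finset.mem_filter, Finset.mem_univ, true_and] at hj
      rw [Finset.mem_Ioi]
      by_contra hle
      push_neg at hle
      exact absurd hpos (not_le.mpr (lt_of_le_of_lt (hdec hle) hj))
    have hc := Finset.card_le_card hsub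
    rw [Fin.card_Ioi, ← hθ] at hc
    have hi' : (i : ℕ) < n := i.isLt
    omega
  have hmR : (1 : ℝ) ≤ (m : ℝ) := by exact_mod_cast hm1
  have hθ1 : 1 ≤ θ := by
    by_contra h0
    push_neg at h0
    have hθ0 : θ = 0 := by omega
    have hall : ∀ i : Fin n, 0 ≤ lam i := fun i => key1 i (by omega)
    have hz : ∀ i ∈ Finset.univ, lam i = 0 :=
      (Finset.sum_eq_zero_iff_of_nonneg (fun i _ => hall i)).mp htr0
    have hzz : ∑ i, lam i ^ 2 = 0 :=
      Finset.sum_eq_zero (fun i hi => by rw [hz i hi]; ring)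
    rw [hsq] at hzz
    linarith
  -- sets
  set P := Finset.univ.filter (fun i : Fin n => (i : ℕ) < p) with hP
  set s := Finset.univ.filter (fun i : Fin n => (i : ℕ) < k) with hs
  set N := Finset.univ.filter (fun i : Fin n => ¬ (i : ℕ) < p) with hN
  have hcardP : P.card = p := stmt9_card_filter_val_lt n p (by omega)
  have hcards : s.card = k := stmt9_card_filter_val_lt n k hkn
  have hNcard : N.card = θ := by
    have hND : N = D := by
      ext i
      simp only [hN, hD, Finset.mem_filter, Finset.mem_univ, true_and]
      constructor
      · intro h; exact key2 i (by omega)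
      · intro h
        intro hlt
        exact absurd (key1 i hlt) (not_le.mpr h)
    rw [hND, ← hθ]
  set T := ∑ i ∈ P, lam i with hT
  set S := ∑ i ∈ s, lam i with hS
  set Q := ∑ i ∈ P, lam i ^ 2 with hQ
  set R := ∑ i ∈ N, lam i ^ 2 with hR
  have hTN : ∑ i ∈ N, lam i = -T := by
    have := Finset.sum_filter_add_sum_filter_not Finset.univ
      (fun i : Fin n => (i : ℕ) < p) lam
    rw [htr0] at this
    rw [← hP, ← hN] at this
    linarith [this]
  have hQR : Q + R = 2 * (m : ℝ) := by
    have := Finset.sum_filter_add_sum_filter_not Finset.univ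
      (fun i : Fin n => (i : ℕ) < p) (fun i => lam i ^ 2)
    rw [hsq] at this
    rw [← hP, ← hN] at this
    linarith [this]
  have hR0 : 0 ≤ R := Finset.sum_nonneg (fun i _ => sq_nonneg _)
  have hCS_T : T ^ 2 ≤ (p : ℝ) * Q := by
    have := sq_sum_le_card_mul_sum_sq (s := P) (f := lam)
    rwa [hcardP] at this
  have hCS_N : T ^ 2 ≤ (θ : ℝ) * R := by
    have := sq_sum_le_card_mul_sum_sq (s := N) (f := lam)
    rw [hNcard, hTN] at this
    calc T ^ 2 = (-T) ^ 2 := by ring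
      _ ≤ (θ : ℝ) * R := this
  have hθR : (1 : ℝ) ≤ (θ : ℝ) := by exact_mod_cast hθ1
  have hkR : (1 : ℝ) ≤ (k : ℝ) := by exact_mod_cast hk1
  -- the final step
  have final : ∀ W : ℝ, 0 ≤ W → S ≤ W →
      ((θ : ℝ) + 1) * W ^ 2 ≤ 2 * (m : ℝ) * ((k : ℝ) * ((θ : ℝ) + 1) - 1) →
      S ≤ Real.sqrt (2 * (m : ℝ) * ((k : ℝ) - 1 / ((θ : ℝ) + 1))) := by
    intro W hW0 hSW hWX
    have hθpos : (0 : ℝ) < (θ : ℝ) + 1 := by positivity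
    have hW2 : W ^ 2 ≤ 2 * (m : ℝ) * ((k : ℝ) - 1 / ((θ : ℝ) + 1)) := by
      rw [show (2 : ℝ) * m * ((k : ℝ) - 1 / ((θ : ℝ) + 1))
          = (2 * m * ((k : ℝ) * ((θ : ℝ) + 1) - 1)) / ((θ : ℝ) + 1) by
        field_simp]
      rw [le_div_iff₀ hθpos]
      linarith [hWX]
    calc S ≤ W := hSW
      _ = Real.sqrt (W ^ 2) := (Real.sqrt_sq hW0).symm
      _ ≤ _ := Real.sqrt_le_sqrt hW2
  by_cases hkp : k ≤ p
  · -- Case 1 : k ≤ p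
    have hsubs : s ⊆ P := by
      intro i hi
      simp only [hs, Finset.mem_filter, Finset.mem_univ, true_and] at hi
      simp only [hP, Finset.mem_filter, Finset.mem_univ, true_and]
      omega
    have hS0 : 0 ≤ S := Finset.sum_nonneg (fun i hi => by
      simp only [hs, Finset.mem_filter, Finset.mem_univ, true_and] at hi
      exact key1 i (by omega))
    have hCS_s : S ^ 2 ≤ (k : ℝ) * Q := by
      have h1 := sq_sum_le_card_mul_sum_sq (s := s) (f := lam)
      rw [hcards] at h1
      have h2 : ∑ i ∈ s, lam i ^ 2 ≤ Q :=
        Finset.sum_le_sum_of_subset_of_nonneg hsubs (fun i _ _ => sq_nonneg _)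
      calc S ^ 2 ≤ (k : ℝ) * ∑ i ∈ s, lam i ^ 2 := h1
        _ ≤ (k : ℝ) * Q := by
          apply mul_le_mul_of_nonneg_left h2
          positivity
    have hST : S ≤ T :=
      Finset.sum_le_sum_of_subset_of_nonneg hsubs (fun i hi _ => by
        simp only [hP, Finset.mem_filter, Finset.mem_univ, true_and] at hi
        exact key1 i hi)
    have hS2T2 : S ^ 2 ≤ T ^ 2 := by nlinarith [hS0, hST]
    have hSR : S ^ 2 ≤ (θ : ℝ) * R := le_trans hS2T2 hCS_N
    have hQval : Q = 2 * (m : ℝ) - R := by linarith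
    have hcomb : ((θ : ℝ) + (k : ℝ)) * S ^ 2 ≤ 2 * (m : ℝ) * (k : ℝ) * (θ : ℝ) := by
      have h1 : (θ : ℝ) * S ^ 2 ≤ (θ : ℝ) * ((k : ℝ) * Q) :=
        mul_le_mul_of_nonneg_left hCS_s (by positivity)
      have h2 : (k : ℝ) * S ^ 2 ≤ (k : ℝ) * ((θ : ℝ) * R) :=
        mul_le_mul_of_nonneg_left hSR (by positivity)
      rw [hQval] at h1
      nlinarith [h1, h2]
    apply final S hS0 le_rfl
    have hkθpos : (0 : ℝ) < (k : ℝ) + (θ : ℝ) := by positivity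
    have hd : (0:ℝ) ≤ 2 * (m:ℝ) * ((θ:ℝ) * ((k:ℝ)^2 - 1) + (k:ℝ) * ((k:ℝ) - 1)) := by
      have a1 : (0:ℝ) ≤ (k:ℝ)^2 - 1 := by nlinarith
      have a2 : (0:ℝ) ≤ (k:ℝ) - 1 := by linarith
      have a3 : (0:ℝ) ≤ (θ:ℝ) * ((k:ℝ)^2 - 1) + (k:ℝ) * ((k:ℝ) - 1) :=
        add_nonneg (mul_nonneg (by positivity) a1) (mul_nonneg (by positivity) a2)
      have a4 : (0:ℝ) ≤ 2 * (m:ℝ) := by linarith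
      exact mul_nonneg a4 a3
    have hkey : 2 * (m : ℝ) * (k : ℝ) * (θ : ℝ) * ((θ : ℝ) + 1)
        ≤ 2 * (m : ℝ) * ((k : ℝ) * ((θ : ℝ) + 1) - 1) * ((k : ℝ) + (θ : ℝ)) := by
      have hring : 2 * (m : ℝ) * ((k : ℝ) * ((θ : ℝ) + 1) - 1) * ((k : ℝ) + (θ : ℝ))
          - 2 * (m : ℝ) * (k : ℝ) * (θ : ℝ) * ((θ : ℝ) + 1)
          = 2 * (m:ℝ) * ((θ:ℝ) * ((k:ℝ)^2 - 1) + (k:ℝ) * ((k:ℝ) - 1)) := by ring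
      linarith [hd, hring]
    have h4 := mul_le_mul_of_nonneg_left hcomb (by positivity : (0:ℝ) ≤ (θ:ℝ) + 1)
    have h3 : ((θ : ℝ) + 1) * S ^ 2 * ((k : ℝ) + (θ : ℝ))
        ≤ 2 * (m : ℝ) * ((k : ℝ) * ((θ : ℝ) + 1) - 1) * ((k : ℝ) + (θ : ℝ)) := by
      calc ((θ : ℝ) + 1) * S ^ 2 * ((k : ℝ) + (θ : ℝ))
          = ((θ:ℝ) + 1) * (((θ:ℝ) + (k:ℝ)) * S ^ 2) := by ring
        _ ≤ ((θ:ℝ) + 1) * (2 * (m:ℝ) * (k:ℝ) * (θ:ℝ)) := h4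
        _ = 2 * (m : ℝ) * (k : ℝ) * (θ : ℝ) * ((θ : ℝ) + 1) := by ring
        _ ≤ _ := hkey
    exact (mul_le_mul_iff_of_pos_right hkθpos).mp h3
  · -- Case 2 : p < k
    push_neg at hkp
    have hPs : P ⊆ s := by
      intro i hi
      simp only [hP, Finset.mem_filter, Finset.mem_univ, true_and] at hi
      simp only [hs, Finset.mem_filter, Finset.mem_univ, true_and]
      omega
    have hST : S ≤ T := by
      have hsd : ∑ i ∈ s \ P, lam i + ∑ i ∈ P, lam i = ∑ i ∈ s, lam i :=
        Finset.sum_sdiff hPs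
      have hneg : ∑ i ∈ s \ P, lam i ≤ 0 :=
        Finset.sum_nonpos (fun i hi => by
          rw [Finset.mem_sdiff] at hi
          obtain ⟨_, hiP⟩ := hi
          simp only [hP, Finset.mem_filter, Finset.mem_univ, true_and, not_lt] at hiP
          exact le_of_lt (key2 i hiP))
      rw [hS, ← hsd]
      linarith
    by_cases hSsign : S ≤ 0
    · exact le_trans hSsign (Real.sqrt_nonneg _)
    · push_neg at hSsign
      have hT0 : 0 ≤ T := le_trans (le_of_lt hSsign) hST
      have hQval : Q = 2 * (m : ℝ) - R := by linarith
      have hcomb : ((p : ℝ) + (θ : ℝ)) * T ^ 2 ≤ 2 * (m : ℝ) * (p : ℝ) * (θ : ℝ) := by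
        have h1 : (θ : ℝ) * T ^ 2 ≤ (θ : ℝ) * ((p : ℝ) * Q) :=
          mul_le_mul_of_nonneg_left hCS_T (by positivity)
        have h2 : (p : ℝ) * T ^ 2 ≤ (p : ℝ) * ((θ : ℝ) * R) :=
          mul_le_mul_of_nonneg_left hCS_N (by positivity)
        rw [hQval] at h1
        nlinarith [h1, h2]
      apply final T hT0 hST
      have hkp' : (p : ℝ) + 1 ≤ (k : ℝ) := by exact_mod_cast hkp
      have hpθpos : (0 : ℝ) < (p : ℝ) + (θ : ℝ) := by
        have : (0:ℝ) ≤ (p:ℝ) := Nat.cast_nonneg _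
        linarith
      have hp0 : (0:ℝ) ≤ (p:ℝ) := Nat.cast_nonneg _
      have hkey : 2 * (m : ℝ) * (p : ℝ) * (θ : ℝ) * ((θ : ℝ) + 1)
          ≤ 2 * (m : ℝ) * ((k : ℝ) * ((θ : ℝ) + 1) - 1) * ((p : ℝ) + (θ : ℝ)) := by
        have b1 : (0:ℝ) ≤ ((k:ℝ) - ((p:ℝ) + 1)) * ((θ:ℝ) + 1) :=
          mul_nonneg (by linarith) (by positivity)
        have e1 : (p:ℝ) * (θ:ℝ) + (p:ℝ) + (θ:ℝ) ≤ (k:ℝ) * ((θ:ℝ) + 1) - 1 := by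
          nlinarith [b1]
        have e2 : ((p:ℝ) * (θ:ℝ) + (p:ℝ) + (θ:ℝ)) * ((p:ℝ) + (θ:ℝ))
            ≤ ((k:ℝ) * ((θ:ℝ) + 1) - 1) * ((p:ℝ) + (θ:ℝ)) :=
          mul_le_mul_of_nonneg_right e1 (by linarith)
        have hd2 : (0:ℝ) ≤ (p:ℝ)^2 * (θ:ℝ) + (p:ℝ)^2 + (p:ℝ) * (θ:ℝ) + (θ:ℝ)^2 := by
          positivity
        have e3 : (p:ℝ) * (θ:ℝ) * ((θ:ℝ) + 1)
            ≤ ((k:ℝ) * ((θ:ℝ) + 1) - 1) * ((p:ℝ) + (θ:ℝ)) := by nlinarith [e2, hd2]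
        have a4 : (0:ℝ) ≤ 2 * (m:ℝ) := by linarith
        calc 2 * (m : ℝ) * (p : ℝ) * (θ : ℝ) * ((θ : ℝ) + 1)
            = 2 * (m:ℝ) * ((p:ℝ) * (θ:ℝ) * ((θ:ℝ) + 1)) := by ring
          _ ≤ 2 * (m:ℝ) * (((k:ℝ) * ((θ:ℝ) + 1) - 1) * ((p:ℝ) + (θ:ℝ))) :=
              mul_le_mul_of_nonneg_left e3 a4
          _ = 2 * (m : ℝ) * ((k : ℝ) * ((θ : ℝ) + 1) - 1) * ((p : ℝ) + (θ : ℝ)) := by ring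
      have h4 := mul_le_mul_of_nonneg_left hcomb (by positivity : (0:ℝ) ≤ (θ:ℝ) + 1)
      have h3 : ((θ : ℝ) + 1) * T ^ 2 * ((p : ℝ) + (θ : ℝ))
          ≤ 2 * (m : ℝ) * ((k : ℝ) * ((θ : ℝ) + 1) - 1) * ((p : ℝ) + (θ : ℝ)) := by
        calc ((θ : ℝ) + 1) * T ^ 2 * ((p : ℝ) + (θ : ℝ))
            = ((θ:ℝ) + 1) * (((p:ℝ) + (θ:ℝ)) * T ^ 2) := by ring
          _ ≤ ((θ:ℝ) + 1) * (2 * (m:ℝ) * (p:ℝ) * (θ:ℝ)) := h4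
          _ = 2 * (m : ℝ) * (p : ℝ) * (θ : ℝ) * ((θ : ℝ) + 1) := by ring
          _ ≤ _ := hkey
      exact (mul_le_mul_iff_of_pos_right hpθpos).mp h3
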